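/- There exists a constant c > 0 such that for every Boolean function f : {0,1}^n → {0,1}, the energy complexity of f satisfies EC(f) ≤ (1/2)·D(f)² + c·D(f), where D(f) is the decision tree complexity of f. -/

import Mathlib

/-- A gate in a Boolean circuit over the standard basis `{∨₂, ∧₂, ¬}`:
input gates labelled by variables, constant gates, and `∧`/`∨`/`¬` gates
whose arguments are (indices of) earlier gates. -/
inductive Gate (n : ℕ) : Type where
  | input : Fin n → Gate n
  | const : Bool → Gate n
  | and : ℕ → ℕ → Gate n
  | or : ℕ → ℕ → Gate n
  | not : ℕ → Gate n
deriving DecidableEq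

/-- The indices of the incoming gates of a gate. -/
def Gate.deps {n : ℕ} : Gate n → List ℕ
  | .and a b => [a, b]
  | .or a b => [a, b]
  | .not a => [a]
  | _ => []

/-- Inner gates are the non-input (and non-constant) gates, i.e. `∧`, `∨`, `¬` gates. -/
def Gate.isInner {n : ℕ} : Gate n → Bool
  | .and _ _ => true
  | .or _ _ => true
  | .not _ => true
  | _ => false

/-- A Boolean circuit over the standard basis on `n` input variables: a sequence of
gates (topologically sorted, so each gate only takes earlier gates as inputs,
which makes the underlying graph acyclic) together with a designated output gate. -/
structure Circuit (n : ℕ) : Type where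
  size : ℕ
  gates : Fin size → Gate n
  out : Fin size
  wf : ∀ i : Fin size, ∀ j ∈ (gates i).deps, j < (i : ℕ)

/-- The Boolean value of gate `i` of circuit `C` under input `x`. -/
def Circuit.evalGate {n : ℕ} (C : Circuit n) (x : Fin n → Bool) (i : ℕ) (h : i < C.size) :
    Bool :=
  match hg : C.gates ⟨i, h⟩ with
  | .input j => x j
  | .const b => b
  | .not a =>
      have ha : a < i := C.wf ⟨i, h⟩ a (by rw [hg]; simp [Gate.deps])
      ! C.evalGate x a (ha.trans h)
  | .and a b =>
      have ha : a < i := C.wf ⟨i, h⟩ a (by rw [hg]; simp [Gate.deps])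
      have hb : b < i := C.wf ⟨i, h⟩ b (by rw [hg]; simp [Gate.deps])
      C.evalGate x a (ha.trans h) && C.evalGate x b (hb.trans h)
  | .or a b =>
      have ha : a < i := C.wf ⟨i, h⟩ a (by rw [hg]; simp [Gate.deps])
      have hb : b < i := C.wf ⟨i, h⟩ b (by rw [hg]; simp [Gate.deps])
      C.evalGate x a (ha.trans h) || C.evalGate x b (hb.trans h)
termination_by i

/-- The output of circuit `C` on input `x`. -/
def Circuit.output {n : ℕ} (C : Circuit n) (x : Fin n → Bool) : Bool :=
  C.evalGate x C.out C.out.isLt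

/-- `C` computes the Boolean function `f`. -/
def Circuit.Computes {n : ℕ} (C : Circuit n) (f : (Fin n → Bool) → Bool) : Prop :=
  ∀ x, C.output x = f x

/-- The number of activated inner gates of `C` under input `x`. -/
def Circuit.energyAt {n : ℕ} (C : Circuit n) (x : Fin n → Bool) : ℕ :=
  (Finset.univ.filter fun i : Fin C.size =>
    (C.gates i).isInner = true ∧ C.evalGate x i i.isLt = true).card

/-- The energy complexity `EC(C)` of a circuit `C`: the maximum number of
activated inner gates over all inputs. -/
def Circuit.energy {n : ℕ} (C : Circuit n) : ℕ :=
  Finset.univ.sup fun x : Fin n → Bool => C.energyAt x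

/-- The energy complexity `EC(f)` of a Boolean function `f`: the minimum of `EC(C)`
over all circuits `C` computing `f`. -/
noncomputable def EC {n : ℕ} (f : (Fin n → Bool) → Bool) : ℕ :=
  sInf {k | ∃ C : Circuit n, C.Computes f ∧ C.energy = k}

/-- A deterministic decision tree on `n` Boolean variables: internal nodes query a
variable (left child on `0`, right child on `1`) and leaves are labelled `0`/`1`. -/
inductive DTree (n : ℕ) : Type where
  | leaf : Bool → DTree n
  | node : Fin n → DTree n → DTree n → DTree n

/-- Evaluation of a decision tree on an input. -/
def DTree.eval {n : ℕ} : DTree n → (Fin n → Bool) → Bool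
  | .leaf b, _ => b
  | .node i t0 t1, x => if x i then t1.eval x else t0.eval x

/-- The depth of a decision tree (number of queries on a worst-case input). -/
def DTree.depth {n : ℕ} : DTree n → ℕ
  | .leaf _ => 0
  | .node _ t0 t1 => max t0.depth t1.depth + 1

/-- The decision tree complexity `D(f)`: the minimum depth of a decision tree
computing `f`. -/
noncomputable def Dcomp {n : ℕ} (f : (Fin n → Bool) → Bool) : ℕ :=
  sInf {k | ∃ T : DTree n, (∀ x, T.eval x = f x) ∧ T.depth = k}

section Infra

variable {n : ℕ}

def gval (x : Fin n → Bool) (S : List Bool) : Gate n → Bool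
  | .input j => x j
  | .const b => b
  | .and a b => S.getD a false && S.getD b false
  | .or a b => S.getD a false || S.getD b false
  | .not a => !(S.getD a false)

def evalFrom (x : Fin n → Bool) (S : List Bool) (L : List (Gate n)) : List Bool :=
  L.foldl (fun S g => S ++ [gval x S g]) S

lemma evalFrom_nil (x : Fin n → Bool) (S : List Bool) : evalFrom x S [] = S := rfl

lemma evalFrom_append (x : Fin n → Bool) (S : List Bool) (L1 L2 : List (Gate n)) :
    evalFrom x S (L1 ++ L2) = evalFrom x (evalFrom x S L1) L2 :=
  List.foldl_append

lemma evalFrom_singleton (x : Fin n → Bool) (S : List Bool) (g : Gate n) :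
    evalFrom x S [g] = S ++ [gval x S g] := rfl

lemma evalFrom_length (x : Fin n → Bool) (S : List Bool) (L : List (Gate n)) :
    (evalFrom x S L).length = S.length + L.length := by
  induction L generalizing S with
  | nil => simp [evalFrom_nil]
  | cons g L ih =>
      have : evalFrom x S (g :: L) = evalFrom x (S ++ [gval x S g]) L := rfl
      rw [this, ih]
      simp; omega

lemma evalFrom_prefix (x : Fin n → Bool) (S : List Bool) (L : List (Gate n)) :
    S <+: evalFrom x S L := by
  induction L generalizing S with
  | nil => simp [evalFrom_nil]
  | cons g L ih =>
      have h1 : evalFrom x S (g :: L) = evalFrom x (S ++ [gval x S g]) L := rfl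
      rw [h1]
      exact (List.prefix_append S [gval x S g]).trans (ih _)

def eV (x : Fin n → Bool) (L : List (Gate n)) : List Bool := evalFrom x [] L

lemma eV_length (x : Fin n → Bool) (L : List (Gate n)) : (eV x L).length = L.length := by
  simp [eV, evalFrom_length]

/-- The value of wire `w` in circuit-list `L` under input `x`. -/
def val (x : Fin n → Bool) (L : List (Gate n)) (w : ℕ) : Bool := (eV x L).getD w false

lemma getD_of_prefix {α : Type*} {L1 L2 : List α} (h : L1 <+: L2) {i : ℕ}
    (hi : i < L1.length) (d : α) : L2.getD i d = L1.getD i d := by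
  obtain ⟨t, rfl⟩ := h
  rw [List.getD_eq_getElem _ _ hi, List.getD_eq_getElem _ _ (by simp; omega)]
  exact List.getElem_append_left hi
lemma val_prefix {L1 L2 : List (Gate n)} (h : L1 <+: L2) {w : ℕ} (hw : w < L1.length)
    (x : Fin n → Bool) : val x L2 w = val x L1 w := by
  obtain ⟨t, rfl⟩ := h
  have h1 : eV x (L1 ++ t) = evalFrom x (eV x L1) t := evalFrom_append x [] L1 t
  have h2 : eV x L1 <+: eV x (L1 ++ t) := h1 ▸ evalFrom_prefix x (eV x L1) t
  exact getD_of_prefix h2 (by rw [eV_length]; exact hw) false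

lemma eV_push (x : Fin n → Bool) (L : List (Gate n)) (g : Gate n) :
    eV x (L ++ [g]) = eV x L ++ [gval x (eV x L) g] := by
  rw [eV, evalFrom_append]; rfl

lemma val_push (x : Fin n → Bool) (L : List (Gate n)) (g : Gate n) :
    val x (L ++ [g]) L.length = gval x (eV x L) g := by
  rw [val, eV_push]
  rw [List.getD_eq_getElem _ _ (by simp [eV_length])]
  rw [List.getElem_append_right (by simp [eV_length])]
  simp [eV_length]

lemma val_push_and (x : Fin n → Bool) (L : List (Gate n)) (a b : ℕ) :
    val x (L ++ [Gate.and a b]) L.length = (val x L a && val x L b) := val_push x L _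

lemma val_push_or (x : Fin n → Bool) (L : List (Gate n)) (a b : ℕ) :
    val x (L ++ [Gate.or a b]) L.length = (val x L a || val x L b) := val_push x L _

lemma val_push_not (x : Fin n → Bool) (L : List (Gate n)) (a : ℕ) :
    val x (L ++ [Gate.not a]) L.length = !(val x L a) := val_push x L _

lemma val_push_input (x : Fin n → Bool) (L : List (Gate n)) (j : Fin n) :
    val x (L ++ [Gate.input j]) L.length = x j := val_push x L _

lemma val_push_const (x : Fin n → Bool) (L : List (Gate n)) (b : Bool) :
    val x (L ++ [Gate.const b]) L.length = b := val_push x L _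

/-- Energy (number of activated inner gates) of the circuit-list `L` on input `x`. -/
def en (x : Fin n → Bool) (L : List (Gate n)) : ℕ :=
  ∑ i ∈ Finset.range L.length,
    if (L.getD i (Gate.const false)).isInner = true ∧ val x L i = true then 1 else 0

lemma en_push (x : Fin n → Bool) (L : List (Gate n)) (g : Gate n) :
    en x (L ++ [g]) = en x L +
      (if g.isInner = true ∧ val x (L ++ [g]) L.length = true then 1 else 0) := by
  rw [en, en]
  have hlen : (L ++ [g]).length = L.length + 1 := by simp
  rw [hlen, Finset.sum_range_succ]
  congr 1
  · apply Finset.sum_congr rfl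
    intro i hi
    rw [Finset.mem_range] at hi
    rw [getD_of_prefix (List.prefix_append L [g]) hi, val_prefix (List.prefix_append L [g]) hi]
  · congr 2
    rw [List.getD_eq_getElem _ _ (by simp), List.getElem_append_right (by simp)]
    simp

lemma en_push_le (x : Fin n → Bool) (L : List (Gate n)) (g : Gate n) :
    en x (L ++ [g]) ≤ en x L + 1 := by
  rw [en_push]; split <;> omega

lemma en_push_false (x : Fin n → Bool) (L : List (Gate n)) (g : Gate n)
    (h : val x (L ++ [g]) L.length = false) : en x (L ++ [g]) = en x L := by
  rw [en_push]
  simp [h]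

/-- Well-formedness: every gate's dependencies point strictly earlier. -/
def WFL (L : List (Gate n)) : Prop :=
  ∀ i, (h : i < L.length) → ∀ j ∈ (L[i]).deps, j < i

lemma WFL_push {L : List (Gate n)} {g : Gate n} (h : WFL L)
    (hg : ∀ j ∈ g.deps, j < L.length) : WFL (L ++ [g]) := by
  intro i hi j hj
  rcases Nat.lt_or_ge i L.length with hlt | hge
  · rw [List.getElem_append_left hlt] at hj
    exact h i hlt j hj
  · have : i = L.length := by simp at hi; omega
    subst this
    rw [List.getElem_append_right (by omega)] at hj
    simpa using hg j (by simpa using hj)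
lemma take_push {L : List (Gate n)} {i : ℕ} (h : i < L.length) :
    L.take (i + 1) = L.take i ++ [L[i]] := by
  rw [List.take_succ, List.getElem?_eq_getElem h]
  rfl

lemma val_take {L : List (Gate n)} {i a : ℕ} (h : i ≤ L.length) (ha : a < i)
    (x : Fin n → Bool) : val x (L.take i) a = val x L a := by
  rw [val_prefix (List.take_prefix i L) (by rw [List.length_take]; omega)]

lemma val_getElem_eq {L : List (Gate n)} {i : ℕ} (h : i < L.length) (x : Fin n → Bool) :
    val x L i = gval x (eV x (L.take i)) L[i] := by
  have h1 : val x L i = val x (L.take (i+1)) i := by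
    rw [val_prefix (List.take_prefix (i+1) L) (by rw [List.length_take]; omega)]
  have h2 : (L.take i).length = i := by rw [List.length_take]; omega
  have h3 := val_push x (L.take i) (L[i])
  rw [h2] at h3
  rw [h1, take_push h, h3]

lemma eV_take_getD {L : List (Gate n)} {i a : ℕ} (h : i ≤ L.length) (ha : a < i)
    (x : Fin n → Bool) : (eV x (L.take i)).getD a false = val x L a := by
  rw [show (eV x (L.take i)).getD a false = val x (L.take i) a from rfl, val_take h ha]

lemma val_getElem_and {L : List (Gate n)} {i a b : ℕ} (h : i < L.length)
    (hg : L[i] = Gate.and a b) (ha : a < i) (hb : b < i) (x : Fin n → Bool) :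
    val x L i = (val x L a && val x L b) := by
  rw [val_getElem_eq h, hg, gval, eV_take_getD (le_of_lt h) ha, eV_take_getD (le_of_lt h) hb]

lemma val_getElem_or {L : List (Gate n)} {i a b : ℕ} (h : i < L.length)
    (hg : L[i] = Gate.or a b) (ha : a < i) (hb : b < i) (x : Fin n → Bool) :
    val x L i = (val x L a || val x L b) := by
  rw [val_getElem_eq h, hg, gval, eV_take_getD (le_of_lt h) ha, eV_take_getD (le_of_lt h) hb]

lemma val_getElem_not {L : List (Gate n)} {i a : ℕ} (h : i < L.length)
    (hg : L[i] = Gate.not a) (ha : a < i) (x : Fin n → Bool) :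
    val x L i = !(val x L a) := by
  rw [val_getElem_eq h, hg, gval, eV_take_getD (le_of_lt h) ha]

lemma val_getElem_input {L : List (Gate n)} {i : ℕ} {j : Fin n} (h : i < L.length)
    (hg : L[i] = Gate.input j) (x : Fin n → Bool) : val x L i = x j := by
  rw [val_getElem_eq h, hg, gval]

lemma val_getElem_const {L : List (Gate n)} {i : ℕ} {b : Bool} (h : i < L.length)
    (hg : L[i] = Gate.const b) (x : Fin n → Bool) : val x L i = b := by
  rw [val_getElem_eq h, hg, gval]

/-- The flat circuit associated to a well-formed gate list. -/
def toCircuit (L : List (Gate n)) (hWF : WFL L) (o : ℕ) (ho : o < L.length) : Circuit n where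
  size := L.length
  gates := fun i => L[i]
  out := ⟨o, ho⟩
  wf := fun i j hj => hWF i i.isLt j hj

lemma evalGate_eq (L : List (Gate n)) (hWF : WFL L) (o : ℕ) (ho : o < L.length)
    (x : Fin n → Bool) : ∀ i (h : i < L.length),
    (toCircuit L hWF o ho).evalGate x i h = val x L i := by
  intro i
  induction i using Nat.strong_induction_on with
  | _ i ih =>
    intro h
    rw [Circuit.evalGate.eq_def (toCircuit L hWF o ho) x i h]
    have hgates : (toCircuit L hWF o ho).gates ⟨i, h⟩ = L[i] := rfl
    split
    · next j heq => exact (val_getElem_input h (hgates.symm.trans heq) x).symm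
    · next b heq => exact (val_getElem_const h (hgates.symm.trans heq) x).symm
    · next a heq =>
        have hLi : L[i] = Gate.not a := hgates.symm.trans heq
        have ha : a < i := hWF i h a (by rw [hLi]; simp [Gate.deps])
        simp only [ih a ha]
        exact (congrArg (fun v => !v) (ih a ha (ha.trans h))).trans (val_getElem_not h hLi ha x).symm
    · next a b heq =>
        have hLi : L[i] = Gate.and a b := hgates.symm.trans heq
        have ha : a < i := hWF i h a (by rw [hLi]; simp [Gate.deps])
        have hb : b < i := hWF i h b (by rw [hLi]; simp [Gate.deps])
        simp only [ih a ha, ih b hb]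
        exact (congrArg₂ (· && ·) (ih a ha (ha.trans h)) (ih b hb (hb.trans h))).trans
          (val_getElem_and h hLi ha hb x).symm
    · next a b heq =>
        have hLi : L[i] = Gate.or a b := hgates.symm.trans heq
        have ha : a < i := hWF i h a (by rw [hLi]; simp [Gate.deps])
        have hb : b < i := hWF i h b (by rw [hLi]; simp [Gate.deps])
        simp only [ih a ha, ih b hb]
        exact (congrArg₂ (· || ·) (ih a ha (ha.trans h)) (ih b hb (hb.trans h))).trans
          (val_getElem_or h hLi ha hb x).symm

lemma en_eq_fin (x : Fin n → Bool) (L : List (Gate n)) :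
    en x L = ∑ i : Fin L.length, if (L[i]).isInner = true ∧ val x L i = true then 1 else 0 := by
  rw [en, ← Fin.sum_univ_eq_sum_range
    (fun k => if (L.getD k (Gate.const false)).isInner = true ∧ val x L k = true then 1 else 0)
    L.length]
  apply Finset.sum_congr rfl
  intro i _
  simp [List.getD_eq_getElem _ _ i.isLt]

lemma energyAt_eq (L : List (Gate n)) (hWF : WFL L) (o : ℕ) (ho : o < L.length)
    (x : Fin n → Bool) : (toCircuit L hWF o ho).energyAt x = en x L := by
  rw [en_eq_fin, Circuit.energyAt, Finset.card_filter]
  apply Finset.sum_congr rfl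
  intro i _
  simp only [evalGate_eq L hWF o ho x i i.isLt]
  rfl
/-- Balanced OR-tree over the `2^k` wires `w base, …, w (base + 2^k - 1)`. -/
def orT : List (Gate n) → ℕ → ℕ → (ℕ → ℕ) → List (Gate n) × ℕ
  | L, 0, base, w => (L, w base)
  | L, k+1, base, w =>
      let P := orT L k base w
      let Q := orT P.1 k (base + 2^k) w
      (Q.1 ++ [Gate.or P.2 Q.2], Q.1.length)

lemma two_pow_succ (k : ℕ) : 2^(k+1) = 2^k + 2^k := by rw [pow_succ]; omega

lemma orT_succ (L : List (Gate n)) (k base : ℕ) (w : ℕ → ℕ) :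
    orT L (k+1) base w =
      ((orT (orT L k base w).1 k (base + 2^k) w).1 ++
        [Gate.or (orT L k base w).2 (orT (orT L k base w).1 k (base + 2^k) w).2],
       (orT (orT L k base w).1 k (base + 2^k) w).1.length) := rfl

lemma orT_prefix (L : List (Gate n)) (k base : ℕ) (w : ℕ → ℕ) :
    L <+: (orT L k base w).1 := by
  induction k generalizing L base with
  | zero => exact List.prefix_rfl
  | succ k ih =>
      exact ((ih L base).trans ((ih _ _).trans (List.prefix_append _ _)))

lemma orT_len_le (L : List (Gate n)) (k base : ℕ) (w : ℕ → ℕ) :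
    L.length ≤ (orT L k base w).1.length :=
  (orT_prefix L k base w).length_le

lemma orT_out_lt (L : List (Gate n)) (k base : ℕ) (w : ℕ → ℕ)
    (hw : ∀ i < 2^k, w (base + i) < L.length) :
    (orT L k base w).2 < (orT L k base w).1.length := by
  cases k with
  | zero =>
      have := hw 0 (by norm_num)
      simpa [orT] using this
  | succ k =>
      rw [orT_succ]
      simp

section OrTLemmas

variable {L : List (Gate n)} {k base : ℕ} {w : ℕ → ℕ}

lemma orT_hw1 (hw : ∀ i < 2^(k+1), w (base + i) < L.length) :
    ∀ i < 2^k, w (base + i) < L.length := fun i hi =>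
  hw i (by rw [two_pow_succ]; omega)

lemma orT_hw2 (hw : ∀ i < 2^(k+1), w (base + i) < L.length) :
    ∀ i < 2^k, w (base + 2^k + i) < (orT L k base w).1.length := by
  intro i hi
  have h1 : base + 2^k + i = base + (2^k + i) := by omega
  rw [h1]
  exact lt_of_lt_of_le (hw (2^k + i) (by rw [two_pow_succ]; omega)) (orT_len_le L k base w)

lemma orT_wf (hWF : WFL L) (hw : ∀ i < 2^k, w (base + i) < L.length) :
    WFL (orT L k base w).1 := by
  induction k generalizing L base with
  | zero => exact hWF
  | succ k ih =>
      have hP := ih hWF (orT_hw1 hw)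
      have hQ := ih hP (orT_hw2 hw)
      rw [orT_succ]
      apply WFL_push hQ
      intro j hj
      have hPo : (orT L k base w).2 < (orT L k base w).1.length :=
        orT_out_lt L k base w (orT_hw1 hw)
      have hQo := orT_out_lt (orT L k base w).1 k (base + 2^k) w (orT_hw2 hw)
      have hPQ := orT_len_le (orT L k base w).1 k (base + 2^k) w
      simp [Gate.deps] at hj
      rcases hj with rfl | rfl
      · omega
      · omega

lemma orT_val (x : Fin n → Bool) (hw : ∀ i < 2^k, w (base + i) < L.length) :
    val x (orT L k base w).1 (orT L k base w).2 =
      decide (∃ i < 2^k, val x L (w (base + i)) = true) := by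
  induction k generalizing L base with
  | zero =>
      show val x L (w base) = _
      by_cases h : val x L (w base) = true
      · rw [h]
        symm
        rw [decide_eq_true_eq]
        exact ⟨0, by norm_num, by simpa using h⟩
      · simp only [Bool.not_eq_true] at h
        rw [h]
        symm
        simp only [decide_eq_false_iff_not]
        rintro ⟨i, hi, hv⟩
        interval_cases i
        simp [h] at hv
  | succ k ih =>
      have hP := orT_prefix L k base w
      have hQpre := orT_prefix (orT L k base w).1 k (base + 2^k) w
      have hPo : (orT L k base w).2 < (orT L k base w).1.length :=
        orT_out_lt L k base w (orT_hw1 hw)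
      rw [orT_succ]
      have hpush := val_push_or x (orT (orT L k base w).1 k (base + 2^k) w).1
        (orT L k base w).2 (orT (orT L k base w).1 k (base + 2^k) w).2
      rw [hpush]
      rw [val_prefix hQpre hPo x]
      rw [ih (orT_hw1 hw)]
      rw [ih (orT_hw2 hw)]
      have hval : ∀ i < 2^k, val x (orT L k base w).1 (w (base + 2^k + i)) =
          val x L (w (base + 2^k + i)) := by
        intro i hi
        apply val_prefix hP
        have h1 : base + 2^k + i = base + (2^k + i) := by omega
        rw [h1]
        exact hw (2^k + i) (by rw [two_pow_succ]; omega)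
      have hsplit : (∃ i < 2^(k+1), val x L (w (base + i)) = true) ↔
          ((∃ i < 2^k, val x L (w (base + i)) = true) ∨
           (∃ i < 2^k, val x (orT L k base w).1 (w (base + 2^k + i)) = true)) := by
        constructor
        · rintro ⟨i, hi, hv⟩
          rw [two_pow_succ] at hi
          by_cases hik : i < 2^k
          · exact Or.inl ⟨i, hik, hv⟩
          · refine Or.inr ⟨i - 2^k, by omega, ?_⟩
            rw [hval _ (by omega)]
            have : base + 2^k + (i - 2^k) = base + i := by omega
            rw [this]; exact hv
        · rintro (⟨i, hi, hv⟩ | ⟨i, hi, hv⟩)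
          · exact ⟨i, by rw [two_pow_succ]; omega, hv⟩
          · refine ⟨2^k + i, by rw [two_pow_succ]; omega, ?_⟩
            rw [hval i hi] at hv
            have : base + (2^k + i) = base + 2^k + i := by omega
            rw [this]; exact hv
      by_cases hA : ∃ i < 2 ^ k, val x L (w (base + i)) = true
      · have hC := hsplit.mpr (Or.inl hA)
        simp [hA, hC]
      · by_cases hB : ∃ i < 2 ^ k, val x (orT L k base w).1 (w (base + 2 ^ k + i)) = true
        · have hC := hsplit.mpr (Or.inr hB)
          simp [hA, hB, hC]
        · have hC : ¬(∃ i < 2 ^ (k + 1), val x L (w (base + i)) = true) :=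
            fun hc => ((hsplit.mp hc).elim hA hB)
          simp [hA, hB, hC]

lemma orT_en_false (x : Fin n → Bool) (hw : ∀ i < 2^k, w (base + i) < L.length)
    (hf : ∀ i < 2^k, val x L (w (base + i)) = false) :
    en x (orT L k base w).1 = en x L := by
  induction k generalizing L base with
  | zero => rfl
  | succ k ih =>
      have hP := orT_prefix L k base w
      have henP := ih (orT_hw1 hw) (fun i hi => hf i (by rw [two_pow_succ]; omega))
      have hfQ : ∀ i < 2^k, val x (orT L k base w).1 (w (base + 2^k + i)) = false := by
        intro i hi
        have h1 : base + 2^k + i = base + (2^k + i) := by omega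
        rw [h1, val_prefix hP (hw (2^k + i) (by rw [two_pow_succ]; omega)) x]
        exact hf (2^k + i) (by rw [two_pow_succ]; omega)
      have henQ := ih (orT_hw2 hw) hfQ
      rw [orT_succ]
      rw [en_push_false, henQ, henP]
      rw [val_push_or]
      have hv := orT_val x (orT_hw1 hw)
      have hvQ := orT_val (L := (orT L k base w).1) x (orT_hw2 hw)
      rw [val_prefix (orT_prefix (orT L k base w).1 k (base + 2^k) w)
        (orT_out_lt L k base w (orT_hw1 hw)) x, hv, hvQ]
      simp only [Bool.or_eq_false_iff, decide_eq_false_iff_not]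
      constructor
      · rintro ⟨i, hi, hvi⟩
        rw [hf i (by rw [two_pow_succ]; omega)] at hvi
        exact Bool.false_ne_true hvi
      · rintro ⟨i, hi, hvi⟩
        rw [hfQ i hi] at hvi
        exact Bool.false_ne_true hvi

lemma orT_en_le (x : Fin n → Bool) (hw : ∀ i < 2^k, w (base + i) < L.length)
    (hu : ∀ i < 2^k, ∀ j < 2^k, val x L (w (base + i)) = true →
      val x L (w (base + j)) = true → i = j) :
    en x (orT L k base w).1 ≤ en x L + k := by
  induction k generalizing L base with
  | zero => exact le_of_eq rfl
  | succ k ih =>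
      have hP := orT_prefix L k base w
      have hvalQ : ∀ i < 2^k, val x (orT L k base w).1 (w (base + 2^k + i)) =
          val x L (w (base + (2^k + i))) := by
        intro i hi
        have h1 : base + 2^k + i = base + (2^k + i) := by omega
        rw [h1, val_prefix hP (hw (2^k + i) (by rw [two_pow_succ]; omega)) x]
      rw [orT_succ]
      have hen2 : en x (orT (orT L k base w).1 k (base + 2^k) w).1 ≤ en x L + k := by
        by_cases hex : ∃ i < 2^k, val x L (w (base + i)) = true
        · -- left half has the (unique) true input, so right half is all false
          obtain ⟨i0, hi0, hv0⟩ := hex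
          have hfQ : ∀ i < 2^k, val x (orT L k base w).1 (w (base + 2^k + i)) = false := by
            intro i hi
            rw [hvalQ i hi]
            by_contra hc
            simp only [Bool.not_eq_false] at hc
            have := hu i0 (by rw [two_pow_succ]; omega) (2^k + i)
              (by rw [two_pow_succ]; omega) hv0 hc
            omega
          rw [orT_en_false x (orT_hw2 hw) hfQ]
          have := ih (orT_hw1 hw) (fun i hi j hj hvi hvj =>
            hu i (by rw [two_pow_succ]; omega) j (by rw [two_pow_succ]; omega) hvi hvj)
          omega
        · push_neg at hex
          have hfP : ∀ i < 2^k, val x L (w (base + i)) = false := by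
            intro i hi
            have := hex i hi
            simpa using this
          have henP : en x (orT L k base w).1 = en x L := orT_en_false x (orT_hw1 hw) hfP
          have huQ : ∀ i < 2^k, ∀ j < 2^k,
              val x (orT L k base w).1 (w (base + 2^k + i)) = true →
              val x (orT L k base w).1 (w (base + 2^k + j)) = true → i = j := by
            intro i hi j hj hvi hvj
            rw [hvalQ i hi] at hvi
            rw [hvalQ j hj] at hvj
            have := hu (2^k + i) (by rw [two_pow_succ]; omega) (2^k + j)
              (by rw [two_pow_succ]; omega) hvi hvj
            omega
          have := ih (L := (orT L k base w).1) (orT_hw2 hw) huQ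
          omega
      calc en x ((orT (orT L k base w).1 k (base + 2^k) w).1 ++ [_]) ≤
            en x (orT (orT L k base w).1 k (base + 2^k) w).1 + 1 := en_push_le x _ _
        _ ≤ en x L + (k + 1) := by omega

end OrTLemmas
lemma sum_ind_le_one {k i0 : ℕ} (f : ℕ → Bool) (h : ∀ i < k, f i = true → i = i0) :
    (∑ i ∈ Finset.range k, if f i = true then 1 else 0) ≤ 1 := by
  calc (∑ i ∈ Finset.range k, if f i = true then 1 else 0)
      ≤ ∑ i ∈ Finset.range k, if i = i0 then 1 else 0 := by
        apply Finset.sum_le_sum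
        intro i hi
        rw [Finset.mem_range] at hi
        by_cases hf : f i = true
        · rw [if_pos hf, if_pos (h i hi hf)]
        · rw [if_neg hf]; omega
    _ ≤ 1 := by rw [Finset.sum_ite_eq' (Finset.range k) i0 (fun _ => 1)]; split <;> omega

/-- For each `i < k`, pushes an input gate for `q i` and the AND gate `g i ∧ x (q i)`. -/
def andRow : List (Gate n) → ℕ → (ℕ → ℕ) → (ℕ → Fin n) → List (Gate n) × (ℕ → ℕ)
  | L, 0, _, _ => (L, fun _ => 0)
  | L, k+1, g, q =>
      let P := andRow L k g q
      (P.1 ++ [Gate.input (q k)] ++ [Gate.and (g k) P.1.length],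
       fun i => if i = k then P.1.length + 1 else P.2 i)

section AndRow

variable {L : List (Gate n)} {g : ℕ → ℕ} {q : ℕ → Fin n}

lemma andRow_succ_fst (k : ℕ) : (andRow L (k+1) g q).1 =
    (andRow L k g q).1 ++ [Gate.input (q k)] ++
      [Gate.and (g k) (andRow L k g q).1.length] := rfl

lemma andRow_succ_snd (k i : ℕ) : (andRow L (k+1) g q).2 i =
    if i = k then (andRow L k g q).1.length + 1 else (andRow L k g q).2 i := rfl

lemma andRow_succ_len (k : ℕ) : (andRow L (k+1) g q).1.length =
    (andRow L k g q).1.length + 2 := by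
  rw [andRow_succ_fst]; simp

lemma andRow_prefix (k : ℕ) : L <+: (andRow L k g q).1 := by
  induction k with
  | zero => exact List.prefix_rfl
  | succ k ih =>
      rw [andRow_succ_fst]
      exact ih.trans ((List.prefix_append _ _).trans (List.prefix_append _ _))

lemma andRow_len_le (k : ℕ) : L.length ≤ (andRow L k g q).1.length :=
  (andRow_prefix k).length_le

lemma andRow_out_lt (k : ℕ) : ∀ i < k, (andRow L k g q).2 i < (andRow L k g q).1.length := by
  induction k with
  | zero => omega
  | succ k ih =>
      intro i hi
      rw [andRow_succ_snd, andRow_succ_len]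
      by_cases hik : i = k
      · rw [if_pos hik]; omega
      · rw [if_neg hik]
        have := ih i (by omega)
        omega

lemma andRow_wf (k : ℕ) (hWF : WFL L) (hg : ∀ i < k, g i < L.length) :
    WFL (andRow L k g q).1 := by
  induction k with
  | zero => exact hWF
  | succ k ih =>
      have h1 : WFL ((andRow L k g q).1 ++ [Gate.input (q k)]) := by
        apply WFL_push (ih (fun i hi => hg i (by omega)))
        intro j hj
        simp [Gate.deps] at hj
      rw [andRow_succ_fst]
      apply WFL_push h1
      intro j hj
      simp only [Gate.deps, List.mem_cons, List.not_mem_nil, or_false] at hj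
      have hgk := hg k (by omega)
      have hlen := andRow_len_le (L := L) (g := g) (q := q) k
      have hlen2 : ((andRow L k g q).1 ++ [Gate.input (q k)]).length =
          (andRow L k g q).1.length + 1 := by simp
      rcases hj with rfl | rfl <;> omega

lemma andRow_val (k : ℕ) (x : Fin n → Bool) (hg : ∀ i < k, g i < L.length) :
    ∀ i < k, val x (andRow L k g q).1 ((andRow L k g q).2 i) =
      (val x L (g i) && x (q i)) := by
  induction k with
  | zero => omega
  | succ k ih =>
      intro i hi
      have hpre12 : (andRow L k g q).1 <+:
          ((andRow L k g q).1 ++ [Gate.input (q k)] ++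
            [Gate.and (g k) (andRow L k g q).1.length]) :=
        (List.prefix_append _ _).trans (List.prefix_append _ _)
      rw [andRow_succ_fst, andRow_succ_snd]
      by_cases hik : i = k
      · rw [if_pos hik]
        have hlen1 : ((andRow L k g q).1 ++ [Gate.input (q k)]).length =
            (andRow L k g q).1.length + 1 := by simp
        have hpush := val_push_and x ((andRow L k g q).1 ++ [Gate.input (q k)])
          (g k) (andRow L k g q).1.length
        rw [hlen1] at hpush
        rw [List.append_assoc] at hpush ⊢
        rw [← List.append_assoc] at hpush ⊢
        rw [hpush, hik]
        congr 1
        · rw [val_prefix (List.prefix_append _ _)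
            (lt_of_lt_of_le (hg k (by omega)) (andRow_len_le k)) x]
          rw [val_prefix (andRow_prefix k) (hg k (by omega)) x]
        · exact val_push_input x (andRow L k g q).1 (q k)
      · rw [if_neg hik]
        rw [val_prefix hpre12 (andRow_out_lt k i (by omega)) x]
        exact ih (fun j hj => hg j (by omega)) i (by omega)

lemma andRow_en (k : ℕ) (x : Fin n → Bool) (hg : ∀ i < k, g i < L.length) :
    en x (andRow L k g q).1 = en x L +
      ∑ i ∈ Finset.range k, if (val x L (g i) && x (q i)) = true then 1 else 0 := by
  induction k with
  | zero => simp; rfl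
  | succ k ih =>
      rw [andRow_succ_fst, Finset.sum_range_succ]
      rw [en_push, en_push]
      have hIn : (Gate.input (q k) : Gate n).isInner = false := rfl
      have hI0 : (if (Gate.input (q k) : Gate n).isInner = true ∧
          val x ((andRow L k g q).1 ++ [Gate.input (q k)]) (andRow L k g q).1.length = true
          then 1 else 0) = 0 := by
        rw [if_neg]
        rintro ⟨h1, -⟩
        rw [hIn] at h1
        exact Bool.false_ne_true h1
      rw [hI0]
      have hlen1 : ((andRow L k g q).1 ++ [Gate.input (q k)]).length =
          (andRow L k g q).1.length + 1 := by simp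
      have hval : val x ((andRow L k g q).1 ++ [Gate.input (q k)] ++
          [Gate.and (g k) (andRow L k g q).1.length])
          ((andRow L k g q).1 ++ [Gate.input (q k)]).length =
          (val x L (g k) && x (q k)) := by
        have hpush := val_push_and x ((andRow L k g q).1 ++ [Gate.input (q k)])
          (g k) (andRow L k g q).1.length
        rw [hlen1] at hpush
        rw [hlen1, hpush]
        congr 1
        · rw [val_prefix (List.prefix_append _ _)
            (lt_of_lt_of_le (hg k (by omega)) (andRow_len_le k)) x]
          rw [val_prefix (andRow_prefix k) (hg k (by omega)) x]
        · exact val_push_input x (andRow L k g q).1 (q k)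
      rw [hval]
      rw [ih (fun j hj => hg j (by omega))]
      have hAnd : (Gate.and (g k) (andRow L k g q).1.length : Gate n).isInner = true := rfl
      rw [hAnd]
      simp only [true_and]
      omega

end AndRow
/-- For each `i < k`, pushes the AND gate `g i ∧ (wire c)`. -/
def andConst : List (Gate n) → ℕ → (ℕ → ℕ) → ℕ → List (Gate n) × (ℕ → ℕ)
  | L, 0, _, _ => (L, fun _ => 0)
  | L, k+1, g, c =>
      let P := andConst L k g c
      (P.1 ++ [Gate.and (g k) c], fun i => if i = k then P.1.length else P.2 i)

section AndConst

variable {L : List (Gate n)} {g : ℕ → ℕ} {c : ℕ}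

lemma andConst_succ_fst (k : ℕ) : (andConst L (k+1) g c).1 =
    (andConst L k g c).1 ++ [Gate.and (g k) c] := rfl

lemma andConst_succ_snd (k i : ℕ) : (andConst L (k+1) g c).2 i =
    if i = k then (andConst L k g c).1.length else (andConst L k g c).2 i := rfl

lemma andConst_prefix (k : ℕ) : L <+: (andConst L k g c).1 := by
  induction k with
  | zero => exact List.prefix_rfl
  | succ k ih =>
      rw [andConst_succ_fst]
      exact ih.trans (List.prefix_append _ _)

lemma andConst_len_le (k : ℕ) : L.length ≤ (andConst L k g c).1.length :=
  (andConst_prefix k).length_le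

lemma andConst_out_lt (k : ℕ) :
    ∀ i < k, (andConst L k g c).2 i < (andConst L k g c).1.length := by
  induction k with
  | zero => omega
  | succ k ih =>
      intro i hi
      rw [andConst_succ_snd, andConst_succ_fst]
      have hlen : ((andConst L k g c).1 ++ [Gate.and (g k) c]).length =
          (andConst L k g c).1.length + 1 := by simp
      by_cases hik : i = k
      · rw [if_pos hik]; omega
      · rw [if_neg hik]
        have := ih i (by omega)
        omega

lemma andConst_wf (k : ℕ) (hWF : WFL L) (hg : ∀ i < k, g i < L.length)
    (hc : c < L.length) : WFL (andConst L k g c).1 := by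
  induction k with
  | zero => exact hWF
  | succ k ih =>
      rw [andConst_succ_fst]
      apply WFL_push (ih (fun i hi => hg i (by omega)))
      intro j hj
      simp only [Gate.deps, List.mem_cons, List.not_mem_nil, or_false] at hj
      have hgk := hg k (by omega)
      have hlen := andConst_len_le (L := L) (g := g) (c := c) k
      rcases hj with rfl | rfl <;> omega

lemma andConst_val (k : ℕ) (x : Fin n → Bool) (hg : ∀ i < k, g i < L.length)
    (hc : c < L.length) :
    ∀ i < k, val x (andConst L k g c).1 ((andConst L k g c).2 i) =
      (val x L (g i) && val x L c) := by
  induction k with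
  | zero => omega
  | succ k ih =>
      intro i hi
      rw [andConst_succ_fst, andConst_succ_snd]
      by_cases hik : i = k
      · rw [if_pos hik, hik]
        rw [val_push_and]
        congr 1
        · rw [val_prefix (andConst_prefix k) (hg k (by omega)) x]
        · rw [val_prefix (andConst_prefix k) hc x]
      · rw [if_neg hik]
        rw [val_prefix (List.prefix_append _ _) (andConst_out_lt k i (by omega)) x]
        exact ih (fun j hj => hg j (by omega)) i (by omega)

lemma andConst_en (k : ℕ) (x : Fin n → Bool) (hg : ∀ i < k, g i < L.length)
    (hc : c < L.length) :
    en x (andConst L k g c).1 = en x L +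
      ∑ i ∈ Finset.range k, if (val x L (g i) && val x L c) = true then 1 else 0 := by
  induction k with
  | zero => simp; rfl
  | succ k ih =>
      rw [andConst_succ_fst, Finset.sum_range_succ, en_push]
      have hval : val x ((andConst L k g c).1 ++ [Gate.and (g k) c])
          (andConst L k g c).1.length = (val x L (g k) && val x L c) := by
        rw [val_push_and]
        congr 1
        · rw [val_prefix (andConst_prefix k) (hg k (by omega)) x]
        · rw [val_prefix (andConst_prefix k) hc x]
      rw [hval, ih (fun j hj => hg j (by omega))]
      have hAnd : (Gate.and (g k) c : Gate n).isInner = true := rfl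
      rw [hAnd]
      simp only [true_and]
      omega

end AndConst
/-- Perfect decision trees of depth exactly `d`. -/
inductive PTree (n : ℕ) : ℕ → Type where
  | leaf : Bool → PTree n 0
  | node : ∀ {d : ℕ}, Fin n → PTree n d → PTree n d → PTree n (d+1)

def PTree.eval {n : ℕ} : ∀ {d : ℕ}, PTree n d → (Fin n → Bool) → Bool
  | _, .leaf b, _ => b
  | _, .node i t0 t1, x => if x i then t1.eval x else t0.eval x

def PTree.lab {n : ℕ} : PTree n 0 → Bool
  | .leaf b => b

def PTree.qv {n : ℕ} {d : ℕ} : PTree n (d+1) → Fin n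
  | .node i _ _ => i

def PTree.l {n : ℕ} {d : ℕ} : PTree n (d+1) → PTree n d
  | .node _ a _ => a

def PTree.r {n : ℕ} {d : ℕ} : PTree n (d+1) → PTree n d
  | .node _ _ b => b

lemma PTree.eval_zero {n : ℕ} (t : PTree n 0) (x : Fin n → Bool) : t.eval x = t.lab := by
  cases t; rfl

lemma PTree.eval_succ {n : ℕ} {d : ℕ} (t : PTree n (d+1)) (x : Fin n → Bool) :
    t.eval x = if x t.qv then t.r.eval x else t.l.eval x := by
  cases t; rfl

/-- Padding a decision tree of depth at most `d` into a perfect tree of depth `d`. -/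
def pad {n : ℕ} (i0 : Fin n) : ∀ (d : ℕ), DTree n → PTree n d
  | 0, .leaf b => .leaf b
  | 0, .node _ _ _ => .leaf false
  | d+1, .leaf b => .node i0 (pad i0 d (.leaf b)) (pad i0 d (.leaf b))
  | d+1, .node i t0 t1 => .node i (pad i0 d t0) (pad i0 d t1)

lemma pad_eval {n : ℕ} (i0 : Fin n) (d : ℕ) (T : DTree n) (h : T.depth ≤ d)
    (x : Fin n → Bool) : (pad i0 d T).eval x = T.eval x := by
  induction d generalizing T with
  | zero =>
      cases T with
      | leaf b => rfl
      | node i t0 t1 => simp [DTree.depth] at h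
  | succ d ih =>
      cases T with
      | leaf b =>
          have h0 : (DTree.leaf b : DTree n).depth ≤ d := by simp [DTree.depth]
          show (if x i0 = true then (pad i0 d (DTree.leaf b)).eval x
            else (pad i0 d (DTree.leaf b)).eval x) = _
          rw [ih (.leaf b) h0]
          simp [DTree.eval]
      | node i t0 t1 =>
          have h0 : t0.depth ≤ d := by simp [DTree.depth] at h; omega
          have h1 : t1.depth ≤ d := by simp [DTree.depth] at h; omega
          show (if x i then _ else _) = _
          rw [ih t0 h0, ih t1 h1]
          rfl

/-- Energy cost bound of the construction: `cost m j = Σ_{u<m} (j+u+3) + (j+m)`. -/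
def cost : ℕ → ℕ → ℕ
  | 0, j => j
  | m+1, j => j + 3 + cost m (j+1)

lemma cost_eq (m j : ℕ) : 2 * cost m j = 2 * j * (m + 1) + m * (m + 1) + 6 * m := by
  induction m generalizing j with
  | zero => simp [cost]
  | succ m ih =>
      rw [cost, Nat.mul_add, Nat.mul_add, ih (j+1)]
      ring

/-- Step pieces of the main construction. -/
def stepA {n : ℕ} {m : ℕ} (L : List (Gate n)) (j : ℕ) (g : ℕ → ℕ) (t : ℕ → PTree n (m+1)) :
    List (Gate n) × (ℕ → ℕ) :=
  andRow L (2^j) g (fun i => (t i).qv)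

def stepO {n : ℕ} {m : ℕ} (L : List (Gate n)) (j : ℕ) (g : ℕ → ℕ) (t : ℕ → PTree n (m+1)) :
    List (Gate n) × ℕ :=
  orT (stepA L j g t).1 j 0 (stepA L j g t).2

def stepN {n : ℕ} {m : ℕ} (L : List (Gate n)) (j : ℕ) (g : ℕ → ℕ) (t : ℕ → PTree n (m+1)) :
    List (Gate n) :=
  (stepO L j g t).1 ++ [Gate.not (stepO L j g t).2]

def stepD {n : ℕ} {m : ℕ} (L : List (Gate n)) (j : ℕ) (g : ℕ → ℕ) (t : ℕ → PTree n (m+1)) :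
    List (Gate n) × (ℕ → ℕ) :=
  andConst (stepN L j g t) (2^j) g (stepO L j g t).1.length

def newg {n : ℕ} {m : ℕ} (L : List (Gate n)) (j : ℕ) (g : ℕ → ℕ) (t : ℕ → PTree n (m+1)) :
    ℕ → ℕ :=
  fun i => if i < 2^j then (stepA L j g t).2 i else (stepD L j g t).2 (i - 2^j)

def newt {n : ℕ} {m : ℕ} (j : ℕ) (t : ℕ → PTree n (m+1)) : ℕ → PTree n m :=
  fun i => if i < 2^j then (t i).r else (t (i - 2^j)).l

/-- The main construction: given `2^j` guard wires and `2^j` perfect subtrees of depth `m`,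
builds the rest of the circuit, returning the output wire. -/
def build {n : ℕ} : ∀ (m : ℕ), List (Gate n) → ℕ → (ℕ → ℕ) → (ℕ → PTree n m) →
    List (Gate n) × ℕ
  | 0, L, j, g, t => orT L j 0 (fun i => if (t i).lab then g i else 0)
  | m+1, L, j, g, t => build m (stepD L j g t).1 (j+1) (newg L j g t) (newt j t)
theorem build_spec {n : ℕ} : ∀ (m j : ℕ) (L : List (Gate n)) (g : ℕ → ℕ) (t : ℕ → PTree n m),
    WFL L → 0 < L.length → (∀ y, val y L 0 = false) → (∀ i < 2^j, g i < L.length) →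
    (L <+: (build m L j g t).1 ∧ WFL (build m L j g t).1 ∧
      (build m L j g t).2 < (build m L j g t).1.length) ∧
    (∀ x (i0 : ℕ), i0 < 2^j → val x L (g i0) = true →
      (∀ i, i < 2^j → i ≠ i0 → val x L (g i) = false) →
      val x (build m L j g t).1 (build m L j g t).2 = (t i0).eval x ∧
      en x (build m L j g t).1 ≤ en x L + cost m j) := by
  intro m
  induction m with
  | zero =>
      intro j L g t hWF hL0 hz hg
      set w : ℕ → ℕ := fun i => if (t i).lab then g i else 0 with hw_def
      have hw : ∀ i < 2^j, w (0 + i) < L.length := by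
        intro i hi
        simp only [Nat.zero_add, hw_def]
        split
        · exact hg i hi
        · exact hL0
      refine ⟨⟨orT_prefix L j 0 w, orT_wf hWF hw, orT_out_lt L j 0 w hw⟩, ?_⟩
      intro x i0 hi0 hv0 hu
      constructor
      · rw [show (build 0 L j g t).2 = (orT L j 0 w).2 from rfl]
        rw [show (build 0 L j g t).1 = (orT L j 0 w).1 from rfl]
        rw [orT_val x hw, PTree.eval_zero]
        cases hlab : (t i0).lab
        · simp only [decide_eq_false_iff_not]
          rintro ⟨i, hi, hv⟩
          rw [Nat.zero_add] at hv
          by_cases hii : i = i0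
          · subst hii
            rw [hw_def] at hv
            simp only [hlab] at hv
            rw [if_neg (by simp)] at hv
            rw [hz x] at hv
            exact Bool.false_ne_true hv
          · rw [hw_def] at hv
            dsimp at hv
            split at hv
            · rw [hu i hi hii] at hv
              exact Bool.false_ne_true hv
            · rw [hz x] at hv
              exact Bool.false_ne_true hv
        · rw [decide_eq_true_eq]
          refine ⟨i0, hi0, ?_⟩
          rw [Nat.zero_add, hw_def]
          dsimp
          rw [if_pos hlab]
          exact hv0
      · have hu2 : ∀ i < 2^j, ∀ i' < 2^j, val x L (w (0 + i)) = true →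
            val x L (w (0 + i')) = true → i = i' := by
          have key : ∀ i < 2^j, val x L (w (0 + i)) = true → i = i0 := by
            intro i hi hv
            rw [Nat.zero_add] at hv
            by_contra hii
            rw [hw_def] at hv
            dsimp at hv
            split at hv
            · rw [hu i hi hii] at hv
              exact Bool.false_ne_true hv
            · rw [hz x] at hv
              exact Bool.false_ne_true hv
          intro i hi i' hi' hv hv'
          rw [key i hi hv, key i' hi' hv']
        exact orT_en_le x hw hu2
  | succ m ih =>
      intro j L g t hWF hL0 hz hg
      -- Facts about stage A (the AND gates `g i ∧ x (q i)`)
      have hA_pre : L <+: (stepA L j g t).1 := andRow_prefix (2^j)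
      have hA_wf : WFL (stepA L j g t).1 := andRow_wf (2^j) hWF hg
      have hA_out : ∀ i < 2^j, (stepA L j g t).2 i < (stepA L j g t).1.length :=
        andRow_out_lt (2^j)
      -- Facts about stage O (the OR tree)
      have hwO : ∀ i < 2^j, (stepA L j g t).2 (0 + i) < (stepA L j g t).1.length := by
        intro i hi; rw [Nat.zero_add]; exact hA_out i hi
      have hO_pre : (stepA L j g t).1 <+: (stepO L j g t).1 := orT_prefix _ j 0 _
      have hO_wf : WFL (stepO L j g t).1 := orT_wf hA_wf hwO
      have hO_out : (stepO L j g t).2 < (stepO L j g t).1.length := orT_out_lt _ j 0 _ hwO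
      -- Facts about stage N (the NOT gate)
      have hN_wf : WFL (stepN L j g t) := by
        apply WFL_push hO_wf
        intro k hk
        simp only [Gate.deps, List.mem_cons, List.not_mem_nil, or_false] at hk
        subst hk
        exact hO_out
      have hN_len : (stepN L j g t).length = (stepO L j g t).1.length + 1 := by
        rw [stepN]; simp
      have hLN : L <+: stepN L j g t :=
        (hA_pre.trans hO_pre).trans (List.prefix_append _ _)
      have hgN : ∀ i < 2^j, g i < (stepN L j g t).length := by
        intro i hi
        have := hg i hi
        have := hLN.length_le
        omega
      have hcN : (stepO L j g t).1.length < (stepN L j g t).length := by omega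
      -- Facts about stage D (the AND gates `g i ∧ ¬(OR)`)
      have hD_wf : WFL (stepD L j g t).1 := andConst_wf (2^j) hN_wf hgN hcN
      have hD_pre : stepN L j g t <+: (stepD L j g t).1 := andConst_prefix (2^j)
      have hD_out : ∀ i < 2^j, (stepD L j g t).2 i < (stepD L j g t).1.length :=
        andConst_out_lt (2^j)
      have hLD : L <+: (stepD L j g t).1 := hLN.trans hD_pre
      have hD_len : 0 < (stepD L j g t).1.length := by
        have := hLD.length_le; omega
      have hz' : ∀ y, val y (stepD L j g t).1 0 = false := by
        intro y
        rw [val_prefix hLD hL0 y]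
        exact hz y
      have hg' : ∀ i < 2^(j+1), newg L j g t i < (stepD L j g t).1.length := by
        intro i hi
        simp only [newg]
        split
        · next h =>
            have h1 := hA_out i h
            have h2 := hO_pre.length_le
            have h3 := hD_pre.length_le
            omega
        · next h =>
            rw [two_pow_succ] at hi
            exact hD_out (i - 2^j) (by omega)
      have hbuild : build (m+1) L j g t =
          build m (stepD L j g t).1 (j+1) (newg L j g t) (newt j t) := rfl
      obtain ⟨⟨hRpre, hRwf, hRout⟩, hRmain⟩ :=
        ih (j+1) (stepD L j g t).1 (newg L j g t) (newt j t) hD_wf hD_len hz' hg'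
      refine ⟨⟨hLD.trans (by rw [hbuild]; exact hRpre), by rw [hbuild]; exact hRwf,
        by rw [hbuild]; exact hRout⟩, ?_⟩
      intro x i0 hi0 hv0 hu
      -- values at stage A
      have vA : ∀ i < 2^j, val x (stepA L j g t).1 ((stepA L j g t).2 i) =
          (val x L (g i) && x ((t i).qv)) := andRow_val (2^j) x hg
      -- value of the OR tree output
      have vO : val x (stepO L j g t).1 (stepO L j g t).2 = x ((t i0).qv) := by
        rw [stepO, orT_val x hwO]
        cases hb : x ((t i0).qv)
        · simp only [decide_eq_false_iff_not]
          rintro ⟨i, hi, hv⟩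
          rw [Nat.zero_add, vA i hi] at hv
          by_cases hii : i = i0
          · subst hii
            rw [hv0, hb] at hv
            simp at hv
          · rw [hu i hi hii] at hv
            simp at hv
        · rw [decide_eq_true_eq]
          refine ⟨i0, hi0, ?_⟩
          rw [Nat.zero_add, vA i0 hi0, hv0, hb]
          rfl
      -- value of the NOT gate
      have vN : val x (stepN L j g t) (stepO L j g t).1.length = !(x ((t i0).qv)) := by
        rw [stepN, val_push_not, vO]
      -- values at stage D
      have vD : ∀ i < 2^j, val x (stepD L j g t).1 ((stepD L j g t).2 i) =
          (val x L (g i) && !(x ((t i0).qv))) := by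
        intro i hi
        rw [stepD, andConst_val (2^j) x hgN hcN i hi]
        rw [val_prefix hLN (hg i hi) x]
        rw [show val x (stepN L j g t) (stepO L j g t).1.length = !(x ((t i0).qv)) from vN]
      have hA_D : ∀ i < 2^j, val x (stepD L j g t).1 ((stepA L j g t).2 i) =
          (val x L (g i) && x ((t i).qv)) := by
        intro i hi
        rw [val_prefix ((hO_pre.trans (List.prefix_append _ _)).trans hD_pre) (hA_out i hi) x]
        exact vA i hi
      -- the new distinguished index, invariants and the evaluated subtree
      have hstep : ∃ i1, i1 < 2^(j+1) ∧
          val x (stepD L j g t).1 (newg L j g t i1) = true ∧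
          (∀ i, i < 2^(j+1) → i ≠ i1 → val x (stepD L j g t).1 (newg L j g t i) = false) ∧
          (newt j t i1).eval x = (t i0).eval x := by
        cases hb : x ((t i0).qv)
        · refine ⟨i0 + 2^j, by rw [two_pow_succ]; omega, ?_, ?_, ?_⟩
          · simp only [newg]
            rw [if_neg (by omega), show i0 + 2^j - 2^j = i0 from by omega, vD i0 hi0, hv0, hb]
            rfl
          · intro i hi hii
            simp only [newg]
            by_cases hlt : i < 2^j
            · rw [if_pos hlt, hA_D i hlt]
              by_cases hio : i = i0
              · subst hio
                rw [hv0, hb]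
                rfl
              · rw [hu i hlt hio]
                rfl
            · rw [if_neg hlt]
              rw [two_pow_succ] at hi
              rw [vD (i - 2^j) (by omega)]
              have hio : i - 2^j ≠ i0 := by omega
              rw [hu (i - 2^j) (by omega) hio]
              rfl
          · simp only [newt]
            rw [if_neg (by omega), show i0 + 2^j - 2^j = i0 from by omega,
              PTree.eval_succ (t i0) x, hb]
            simp
        · refine ⟨i0, by rw [two_pow_succ]; omega, ?_, ?_, ?_⟩
          · simp only [newg]
            rw [if_pos hi0, hA_D i0 hi0, hv0, hb]
            rfl
          · intro i hi hii
            simp only [newg]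
            by_cases hlt : i < 2^j
            · rw [if_pos hlt, hA_D i hlt]
              rw [hu i hlt hii]
              rfl
            · rw [if_neg hlt]
              rw [two_pow_succ] at hi
              rw [vD (i - 2^j) (by omega), hb]
              simp
          · simp only [newt]
            rw [if_pos hi0, PTree.eval_succ (t i0) x, hb]
            simp
      obtain ⟨i1, hi1, inv2, inv3, hev⟩ := hstep
      obtain ⟨hval_res, hen_res⟩ := hRmain x i1 hi1 inv2 inv3
      constructor
      · rw [hbuild, hval_res, hev]
      · -- energy accounting
        have key : ∀ i < 2^j, val x L (g i) = true → i = i0 := by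
          intro i hi hv
          by_contra hii
          rw [hu i hi hii] at hv
          exact Bool.false_ne_true hv
        have enA : en x (stepA L j g t).1 ≤ en x L + 1 := by
          rw [stepA, andRow_en (2^j) x hg]
          have h2 : (∑ i ∈ Finset.range (2^j),
              if (val x L (g i) && x ((t i).qv)) = true then 1 else 0) ≤ 1 :=
            sum_ind_le_one (i0 := i0) (fun i => val x L (g i) && x ((t i).qv))
              (fun i hi hv => key i hi (by
                rcases Bool.and_eq_true_iff.mp hv with ⟨h1, -⟩
                exact h1))
          omega
        have enO : en x (stepO L j g t).1 ≤ en x (stepA L j g t).1 + j := by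
          rw [stepO]
          apply orT_en_le x hwO
          intro i hi i' hi' hv hv'
          rw [Nat.zero_add] at hv hv'
          rw [vA i hi] at hv
          rw [vA i' hi'] at hv'
          rw [key i hi (Bool.and_eq_true_iff.mp hv).1,
            key i' hi' (Bool.and_eq_true_iff.mp hv').1]
        have enN : en x (stepN L j g t) ≤ en x (stepO L j g t).1 + 1 := en_push_le x _ _
        have enD : en x (stepD L j g t).1 ≤ en x (stepN L j g t) + 1 := by
          rw [stepD, andConst_en (2^j) x hgN hcN]
          have h2 : (∑ i ∈ Finset.range (2^j),
              if (val x (stepN L j g t) (g i) &&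
                val x (stepN L j g t) (stepO L j g t).1.length) = true then 1 else 0) ≤ 1 :=
            sum_ind_le_one (i0 := i0)
              (fun i => val x (stepN L j g t) (g i) && val x (stepN L j g t) (stepO L j g t).1.length)
              (fun i hi hv => by
                rcases Bool.and_eq_true_iff.mp hv with ⟨h1, -⟩
                rw [val_prefix hLN (hg i hi) x] at h1
                exact key i hi h1)
          omega
        rw [hbuild]
        calc en x (build m (stepD L j g t).1 (j+1) (newg L j g t) (newt j t)).1
            ≤ en x (stepD L j g t).1 + cost m (j+1) := hen_res
          _ ≤ en x L + (j + 3 + cost m (j+1)) := by omega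
          _ = en x L + cost (m+1) j := by rw [cost]

/-- The full decision tree querying all the variables in the list `l`. -/
def allTree {n : ℕ} : List (Fin n) → ((Fin n → Bool) → Bool) → DTree n
  | [], g => .leaf (g fun _ => false)
  | i :: r, g => .node i (allTree r fun y => g (Function.update y i false))
      (allTree r fun y => g (Function.update y i true))

lemma allTree_eval {n : ℕ} (l : List (Fin n)) (g : (Fin n → Bool) → Bool)
    (x : Fin n → Bool) :
    (allTree l g).eval x = g (fun j => if j ∈ l then x j else false) := by
  induction l generalizing g with
  | nil => rfl
  | cons i r ih =>
      show (if x i then (allTree r fun y => g (Function.update y i true)).eval x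
        else (allTree r fun y => g (Function.update y i false)).eval x) = _
      have key : ∀ b : Bool, x i = b →
          Function.update (fun j => if j ∈ r then x j else false) i b =
          (fun j => if j ∈ i :: r then x j else false) := by
        intro b hb
        funext j
        by_cases hj : j = i
        · subst hj
          rw [Function.update_self, if_pos List.mem_cons_self, hb]
        · rw [Function.update_of_ne hj]
          simp only [List.mem_cons]
          by_cases hjr : j ∈ r
          · rw [if_pos hjr, if_pos (Or.inr hjr)]
          · rw [if_neg hjr, if_neg (by tauto)]
      cases hxi : x i
      · rw [if_neg (by simp [hxi]), ih]
        rw [key false hxi]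
      · rw [if_pos (by simp [hxi]), ih]
        rw [key true hxi]

lemma exists_dtree {n : ℕ} (f : (Fin n → Bool) → Bool) :
    ∃ T : DTree n, ∀ x, T.eval x = f x := by
  refine ⟨allTree (List.finRange n) f, fun x => ?_⟩
  rw [allTree_eval]
  congr 1
  funext j
  rw [if_pos (List.mem_finRange j)]

lemma toCircuit_output {n : ℕ} (L : List (Gate n)) (hWF : WFL L) (o : ℕ)
    (ho : o < L.length) (x : Fin n → Bool) :
    (toCircuit L hWF o ho).output x = val x L o :=
  evalGate_eq L hWF o ho x o ho

/-- Key bound: `EC f ≤ cost (Dcomp f) 0`. -/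
lemma EC_le_cost {n : ℕ} (f : (Fin n → Bool) → Bool) : EC f ≤ cost (Dcomp f) 0 := by
  have hne : {k | ∃ T : DTree n, (∀ x, T.eval x = f x) ∧ T.depth = k}.Nonempty := by
    obtain ⟨T, hT⟩ := exists_dtree f
    exact ⟨T.depth, T, hT, rfl⟩
  obtain ⟨T, hT, hdep⟩ := Nat.sInf_mem hne
  cases T with
  | leaf b =>
      -- `f` is constant; a single constant gate computes it with zero energy
      have hWF1 : WFL [Gate.const b (n := n)] := by
        intro i h j hj
        simp only [List.length_singleton] at h
        interval_cases i
        simp [Gate.deps] at hj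
      have ho : 0 < [Gate.const b (n := n)].length := by simp
      have hcomp : (toCircuit [Gate.const b] hWF1 0 ho).Computes f := by
        intro x
        rw [toCircuit_output]
        rw [val_getElem_const ho rfl x]
        exact hT x
      have hen : (toCircuit [Gate.const b] hWF1 0 ho).energy = 0 := by
        rw [Circuit.energy]
        apply Nat.le_antisymm _ (Nat.zero_le _)
        apply Finset.sup_le
        intro x _
        rw [energyAt_eq]
        rw [en]
        simp only [List.length_singleton, Finset.range_one, Finset.sum_singleton]
        rw [if_neg]
        rintro ⟨h1, -⟩
        simp [List.getD, Gate.isInner] at h1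
      calc EC f ≤ (toCircuit [Gate.const b] hWF1 0 ho).energy :=
            Nat.sInf_le ⟨_, hcomp, rfl⟩
        _ = 0 := hen
        _ ≤ cost (Dcomp f) 0 := Nat.zero_le _
  | node q t0 t1 =>
      -- pad to a perfect tree of depth `Dcomp f` and run the main construction
      have hTd : (DTree.node q t0 t1).depth ≤ Dcomp f := le_of_eq hdep
      have hWF0 : WFL [Gate.const false (n := n), Gate.const true] := by
        intro i h j hj
        simp only [List.length_cons, List.length_nil] at h
        interval_cases i <;> simp [Gate.deps] at hj
      have hlen0 : 0 < [Gate.const false (n := n), Gate.const true].length := by simp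
      have hz0 : ∀ y : Fin n → Bool, val y [Gate.const false, Gate.const true] 0 = false :=
        fun y => val_getElem_const (by simp) rfl y
      have hv1 : ∀ y : Fin n → Bool, val y [Gate.const false, Gate.const true] 1 = true :=
        fun y => val_getElem_const (by simp) rfl y
      have hg0 : ∀ i < 2^0, (fun _ : ℕ => 1) i <
          [Gate.const false (n := n), Gate.const true].length := by
        intro i hi
        simp
      obtain ⟨⟨hBpre, hBwf, hBout⟩, hBmain⟩ :=
        build_spec (Dcomp f) 0 [Gate.const false, Gate.const true] (fun _ => 1)
          (fun _ => pad q (Dcomp f) (DTree.node q t0 t1)) hWF0 hlen0 hz0 hg0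
      have hmain := fun x => hBmain x 0 (by norm_num) (hv1 x) (by omega)
      have hen0 : ∀ x : Fin n → Bool, en x [Gate.const false, Gate.const true] = 0 := by
        intro x
        rw [en]
        simp only [List.length_cons, List.length_nil]
        rw [show (0 : ℕ) + 1 + 1 = 2 from rfl]
        rw [Finset.sum_range_succ, Finset.sum_range_succ, Finset.sum_range_zero]
        rw [if_neg, if_neg]
        · rintro ⟨h1, -⟩
          simp [List.getD, Gate.isInner] at h1
        · rintro ⟨h1, -⟩
          simp [List.getD, Gate.isInner] at h1
      have hcomp : (toCircuit _ hBwf _ hBout).Computes f := by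
        intro x
        rw [toCircuit_output]
        rw [(hmain x).1]
        rw [pad_eval q (Dcomp f) (DTree.node q t0 t1) hTd x]
        exact hT x
      have henC : (toCircuit _ hBwf _ hBout).energy ≤ cost (Dcomp f) 0 := by
        rw [Circuit.energy]
        apply Finset.sup_le
        intro x _
        rw [energyAt_eq]
        have := (hmain x).2
        rw [hen0 x] at this
        omega
      calc EC f ≤ (toCircuit _ hBwf _ hBout).energy := Nat.sInf_le ⟨_, hcomp, rfl⟩
        _ ≤ cost (Dcomp f) 0 := henC


/-- There is a constant `c > 0` such that every Boolean function
`f : {0,1}^n → {0,1}` satisfies `EC(f) ≤ (1/2)·D(f)² + c·D(f)`. -/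
theorem stmt2 : ∃ c : ℝ, 0 < c ∧ ∀ (n : ℕ) (f : (Fin n → Bool) → Bool),
    (EC f : ℝ) ≤ (1 / 2) * (Dcomp f : ℝ) ^ 2 + c * (Dcomp f : ℝ) := by
  refine ⟨5, by norm_num, ?_⟩
  intro n f
  have h1 : EC f ≤ cost (Dcomp f) 0 := EC_le_cost f
  have h2 : 2 * cost (Dcomp f) 0 = Dcomp f * (Dcomp f + 1) + 6 * Dcomp f := by
    rw [cost_eq]
    ring
  have h3 : (EC f : ℝ) ≤ (cost (Dcomp f) 0 : ℝ) := by exact_mod_cast h1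
  have h4 : (2 : ℝ) * (cost (Dcomp f) 0 : ℝ) =
      (Dcomp f : ℝ) * ((Dcomp f : ℝ) + 1) + 6 * (Dcomp f : ℝ) := by
    exact_mod_cast congrArg (Nat.cast : ℕ → ℝ) h2
  have h5 : (0 : ℝ) ≤ (Dcomp f : ℝ) := Nat.cast_nonneg _
  nlinarith [h3, h4, h5]
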